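/- arXiv:1302.0058 — 5 statements merged into one kernel-verified Lean document; each statement's English description precedes it below -/
import Mathlib

section
/- If w_n = μ(⋃_{k=0}^{n-1} T^{-k}A) is the wandering rate of a set A for a conservative ergodic measure preserving map, then w_n ~ μ({φ < n}) as n → ∞, i.e., the ratio w_n / μ({x : φ(x) < n}) tends to 1 (assuming w_n → ∞). -/
open MeasureTheory Set Filter

/-- If `w_n = μ(⋃_{k=0}^{n-1} T^{-k} A)` is the wandering rate of a set `A` for a
conservative ergodic measure preserving map and `w_n → ∞`, then
`w_n / μ({φ < n}) → 1` as `n → ∞`. -/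
theorem stmt2 {E : Type*} [MeasurableSpace E] (μ : Measure E) [SigmaFinite μ]
    (T : E → E) (hTmeas : Measurable T) (hT : MeasurePreserving T μ μ)
    (hcons : Conservative T μ) (herg : Ergodic T μ) (hinf : μ Set.univ = ⊤)
    (A : Set E) (hA : MeasurableSet A) (hA0 : 0 < μ A) (hAfin : μ A < ⊤)
    (φ : E → ℕ) (hφ : ∀ x, φ x = sInf {n : ℕ | 1 ≤ n ∧ T^[n] x ∈ A})
    (w : ℕ → ℝ) (hw : ∀ n, w n = (μ (⋃ k ∈ Finset.range n, (T^[k]) ⁻¹' A)).toReal)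
    (hw_top : Tendsto w atTop atTop) :
    Tendsto (fun n : ℕ => w n / (μ {x | φ x < n}).toReal) atTop (nhds 1) := by
  -- The set of points that hit `A` at some positive time.
  set S : Set E := ⋃ k : ℕ, T^[k+1] ⁻¹' A with hSdef
  have hSmeas : MeasurableSet S :=
    MeasurableSet.iUnion fun k => (hTmeas.iterate (k+1)) hA
  -- a.e. point of A returns to A (at a positive time), so A ⊆ S a.e.
  have hAS : μ (A \ S) = 0 := by
    have h := hcons.ae_mem_imp_frequently_image_mem (s := A) hA.nullMeasurableSet
    have hsub : ∀ᵐ x ∂μ, x ∈ A → x ∈ S := by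
      filter_upwards [h] with x hx hxA
      obtain ⟨n, hnA, hn1⟩ := ((hx hxA).and_eventually (eventually_ge_atTop 1)).exists
      exact mem_iUnion.2 ⟨n - 1, by simpa [Nat.sub_add_cancel hn1] using hnA⟩
    exact ae_le_set.mp hsub
  -- S is almost invariant
  have hpre : T ⁻¹' S =ᵐ[μ] S := by
    have hsub : T ⁻¹' S ⊆ S := by
      rintro x hx
      obtain ⟨k, hk⟩ := mem_iUnion.mp hx
      exact mem_iUnion.2 ⟨k + 1, by simpa [Function.iterate_succ_apply] using hk⟩
    have hdiff : S \ T ⁻¹' S ⊆ T ⁻¹' (A \ S) := by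
      rintro x ⟨hxS, hxnot⟩
      obtain ⟨k, hk⟩ := mem_iUnion.mp hxS
      have hTx_not : T x ∉ S := hxnot
      rcases Nat.eq_zero_or_pos k with rfl | hkpos
      · refine ⟨by simpa [Function.iterate_succ_apply] using hk, hTx_not⟩
      · exfalso
        apply hTx_not
        refine mem_iUnion.2 ⟨k - 1, ?_⟩
        have hk' : k - 1 + 1 = k := Nat.succ_pred_eq_of_pos hkpos
        show T^[k - 1 + 1] (T x) ∈ A
        rw [hk', ← Function.iterate_succ_apply]
        exact hk
    have h1 : μ (S \ T ⁻¹' S) = 0 := by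
      refine measure_mono_null hdiff ?_
      rw [hT.measure_preimage (hA.diff hSmeas).nullMeasurableSet]
      exact hAS
    have h2 : μ (T ⁻¹' S \ S) = 0 := by
      rw [diff_eq_empty.2 hsub]; exact measure_empty
    exact (ae_eq_set).2 ⟨h2, h1⟩
  -- by ergodicity, S is a.e. everything
  have hSuniv : μ Sᶜ = 0 := by
    rcases herg.quasiErgodic.ae_empty_or_univ₀ hSmeas.nullMeasurableSet hpre with h | h
    · exfalso
      have hS0 : μ S = 0 := ae_eq_empty.mp h
      have : μ (T ⁻¹' A) ≤ μ S := measure_mono fun x hx => mem_iUnion.2 ⟨0, hx⟩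
      rw [hT.measure_preimage hA.nullMeasurableSet, hS0] at this
      exact absurd (le_antisymm this zero_le) (ne_of_gt hA0)
    · exact ae_eq_univ.mp h
  have haeS : ∀ᵐ x ∂μ, x ∈ S := by
    rw [ae_iff]
    exact hSuniv
  -- the auxiliary sets
  set B : ℕ → Set E := fun n => ⋃ k ∈ Finset.Ico 1 n, T^[k] ⁻¹' A with hBdef
  set U : ℕ → Set E := fun n => ⋃ k ∈ Finset.range n, T^[k] ⁻¹' A with hUdef
  -- a.e., {φ < n} = B n
  have hcongr : ∀ n, μ {x | φ x < n} = μ (B n) := by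
    intro n
    refine measure_congr (eventuallyEq_set.2 ?_)
    filter_upwards [haeS] with x hxS
    obtain ⟨k, hk⟩ := mem_iUnion.mp hxS
    have hne : {m : ℕ | 1 ≤ m ∧ T^[m] x ∈ A}.Nonempty := ⟨k + 1, by omega, hk⟩
    have hmem : φ x ∈ {m : ℕ | 1 ≤ m ∧ T^[m] x ∈ A} := by
      rw [hφ x]; exact Nat.sInf_mem hne
    constructor
    · intro hlt
      simp only [hBdef, mem_iUnion]
      exact ⟨φ x, Finset.mem_Ico.2 ⟨hmem.1, hlt⟩, hmem.2⟩
    · intro hxB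
      simp only [hBdef, mem_iUnion] at hxB
      obtain ⟨m, hm, hmA⟩ := hxB
      rw [Finset.mem_Ico] at hm
      calc φ x ≤ m := by rw [hφ x]; exact Nat.sInf_le ⟨hm.1, hmA⟩
        _ < n := hm.2
  -- finiteness of μ (U n)
  have hUfin : ∀ n, μ (U n) ≠ ⊤ := by
    intro n
    obtain ⟨m, hm1, hmn⟩ :=
      ((hw_top.eventually (eventually_ge_atTop 1)).and (eventually_ge_atTop n)).exists
    have hUm : μ (U m) ≠ ⊤ := by
      intro htop
      rw [hw m] at hm1
      rw [htop] at hm1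
      norm_num at hm1
    have hsub : U n ⊆ U m := by
      intro x hx
      simp only [hUdef, mem_iUnion, Finset.mem_range] at hx ⊢
      obtain ⟨k, hk, hmem⟩ := hx
      exact ⟨k, by omega, hmem⟩
    exact fun htop => hUm (top_le_iff.mp (htop ▸ measure_mono hsub))
  -- set inclusions
  have hBU : ∀ n, B n ⊆ U n := by
    intro n x hx
    simp only [hBdef, hUdef, mem_iUnion, Finset.mem_Ico, Finset.mem_range] at hx ⊢
    obtain ⟨k, hk, hmem⟩ := hx
    exact ⟨k, by omega, hmem⟩
  have hUB : ∀ n, U n ⊆ A ∪ B n := by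
    intro n x hx
    simp only [hUdef, mem_iUnion, Finset.mem_range] at hx
    obtain ⟨k, hk, hkA⟩ := hx
    rcases Nat.eq_zero_or_pos k with rfl | hkpos
    · left; simpa using hkA
    · right
      simp only [hBdef, mem_iUnion]
      exact ⟨k, Finset.mem_Ico.2 ⟨hkpos, hk⟩, hkA⟩
  have hBfin : ∀ n, μ (B n) ≠ ⊤ := fun n =>
    fun htop => hUfin n (top_le_iff.mp (htop ▸ measure_mono (hBU n)))
  set a : ℝ := (μ A).toReal with hadef
  set b : ℕ → ℝ := fun n => (μ (B n)).toReal with hbdef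
  have hb_le_w : ∀ n, b n ≤ w n := by
    intro n
    rw [hw n]
    exact ENNReal.toReal_mono (hUfin n) (measure_mono (hBU n))
  have hw_le : ∀ n, w n ≤ a + b n := by
    intro n
    rw [hw n]
    have hfinAB : μ (A ∪ B n) ≠ ⊤ := fun h =>
      (ENNReal.add_ne_top.2 ⟨hAfin.ne, hBfin n⟩)
        (top_le_iff.mp (h ▸ measure_union_le A (B n)))
    calc (μ (U n)).toReal ≤ (μ (A ∪ B n)).toReal :=
          ENNReal.toReal_mono hfinAB (measure_mono (hUB n))
      _ ≤ a + b n := by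
          refine (ENNReal.toReal_mono ?_ (measure_union_le A (B n))).trans_eq ?_
          · exact ENNReal.add_ne_top.2 ⟨hAfin.ne, hBfin n⟩
          · exact ENNReal.toReal_add hAfin.ne (hBfin n)
  have hb_top : Tendsto b atTop atTop := by
    refine tendsto_atTop_mono (fun n => ?_) (tendsto_atTop_add_const_right atTop (-a) hw_top)
    have := hw_le n
    linarith
  have hbpos : ∀ᶠ n in atTop, 0 < b n := hb_top.eventually_gt_atTop 0
  have hupper : Tendsto (fun n => a / b n + 1) atTop (nhds 1) := by
    have := (tendsto_const_nhds (x := a) (f := atTop (α := ℕ))).div_atTop hb_top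
    simpa using this.add (tendsto_const_nhds (x := (1:ℝ)))
  have key : Tendsto (fun n => w n / b n) atTop (nhds 1) := by
    refine tendsto_of_tendsto_of_tendsto_of_le_of_le' tendsto_const_nhds hupper ?_ ?_
    · filter_upwards [hbpos] with n hb
      exact (one_le_div hb).2 (hb_le_w n)
    · filter_upwards [hbpos] with n hb
      rw [div_add' _ _ _ hb.ne', div_le_div_iff_of_pos_right hb]
      linarith [hw_le n]
  have : (fun n : ℕ => w n / (μ {x | φ x < n}).toReal) = fun n => w n / b n := by
    funext n
    rw [hcongr n]
  rw [this]
  exact key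
end

section
/- The moment sequence η_r = r!·Γ(2−β)/Γ(rβ+2−β) of M_β(1−V_β) satisfies the Carleman condition Σ_{k=1}^∞ η_{2k}^{−1/(2k)} = ∞, so the law of M_β(1−V_β) is uniquely determined by its moments. -/
open Real

/-- For `x ≥ 2`, `Γ(x) ≥ 1`. -/
lemma one_le_Gamma_aux {x : ℝ} (hx : 2 ≤ x) : 1 ≤ Real.Gamma x := by
  rcases eq_or_lt_of_le hx with h | h
  · rw [← h, Real.Gamma_two]
  · have := Real.Gamma_strictMonoOn_Ici (a := 2) (b := x) (by simp) (le_of_lt h) h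
    rw [Real.Gamma_two] at this
    exact this.le

/-- The moment sequence `η_r = r! Γ(2-β)/Γ(rβ+2-β)` of `M_β(1-V_β)` satisfies the
Carleman condition `∑_k η_{2k}^{-1/(2k)} = ∞` (the series is not summable). -/
theorem stmt8 (β : ℝ) (hβ0 : 0 ≤ β) (hβ1 : β < 1)
    (η : ℕ → ℝ)
    (hη : ∀ r : ℕ, η r = (r.factorial : ℝ) * Real.Gamma (2 - β) / Real.Gamma (r * β + 2 - β)) :
    ¬ Summable (fun k : ℕ => (η (2 * (k + 1))) ^ (-(1 : ℝ) / (2 * ((k : ℝ) + 1)))) := by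
  intro hsum
  set A : ℝ := Real.Gamma (2 - β) with hA
  have hApos : 0 < A := Real.Gamma_pos_of_pos (by linarith)
  set c : ℝ := min 1 A⁻¹ with hc
  have hcpos : 0 < c := lt_min one_pos (inv_pos.mpr hApos)
  -- key pointwise bound
  have key : ∀ k : ℕ, c / (2 * ((k : ℝ) + 1)) ≤
      (η (2 * (k + 1))) ^ (-(1 : ℝ) / (2 * ((k : ℝ) + 1))) := by
    intro k
    set n : ℕ := 2 * (k + 1) with hn
    have hnpos : (0 : ℝ) < n := by positivity
    have hncast : (n : ℝ) = 2 * ((k : ℝ) + 1) := by push_cast [hn]; ring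
    -- Γ(nβ + 2 - β) ≥ 1
    have hΓ1 : 1 ≤ Real.Gamma ((n : ℝ) * β + 2 - β) := by
      apply one_le_Gamma_aux
      have : 0 ≤ ((n : ℝ) - 1) * β := by
        apply mul_nonneg _ hβ0
        nlinarith
      nlinarith
    -- η n ≤ A * n ^ n
    have hfact : (n.factorial : ℝ) ≤ (n : ℝ) ^ (n : ℕ) := by
      exact_mod_cast Nat.factorial_le_pow n
    have hη_le : η n ≤ A * (n : ℝ) ^ (n : ℕ) := by
      rw [hη n]
      calc (n.factorial : ℝ) * A / Real.Gamma ((n : ℝ) * β + 2 - β)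
          ≤ (n.factorial : ℝ) * A / 1 := by
            apply div_le_div_of_nonneg_left _ one_pos hΓ1
            positivity
        _ = (n.factorial : ℝ) * A := by rw [div_one]
        _ ≤ (n : ℝ) ^ (n : ℕ) * A := by
            apply mul_le_mul_of_nonneg_right hfact hApos.le
        _ = A * (n : ℝ) ^ (n : ℕ) := by ring
    have hηpos : 0 < η n := by
      rw [hη n]
      have := Real.Gamma_pos_of_pos (show (0:ℝ) < (n : ℝ) * β + 2 - β by nlinarith)
      positivity
    set e : ℝ := -(1 : ℝ) / (2 * ((k : ℝ) + 1)) with he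
    have hel : e ≤ 0 := by
      apply div_nonpos_of_nonpos_of_nonneg <;> [norm_num; positivity]
    -- monotonicity: η n ≤ A * n^n, negative exponent reverses
    have h1 : (A * (n : ℝ) ^ (n : ℕ)) ^ e ≤ (η n) ^ e :=
      Real.rpow_le_rpow_of_nonpos hηpos hη_le hel
    -- compute lower bound for (A * n^n)^e
    have h2 : (A * (n : ℝ) ^ (n : ℕ)) ^ e = A ^ e * ((n : ℝ) ^ (n : ℕ)) ^ e :=
      Real.mul_rpow hApos.le (by positivity)
    have h3 : ((n : ℝ) ^ (n : ℕ)) ^ e = (n : ℝ)⁻¹ := by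
      rw [← Real.rpow_natCast (n : ℝ) n, ← Real.rpow_mul hnpos.le]
      have : (n : ℝ) * e = -1 := by
        rw [he, hncast]; field_simp
      rw [this, Real.rpow_neg_one]
    have h4 : c ≤ A ^ e := by
      rcases le_or_gt 1 A with hA1 | hA1
      · have : A ^ (-1 : ℝ) ≤ A ^ e := by
          apply Real.rpow_le_rpow_of_exponent_le hA1
          rw [he, le_div_iff₀ (by positivity : (0:ℝ) < 2 * ((k:ℝ) + 1))]
          nlinarith [(Nat.cast_nonneg k : (0:ℝ) ≤ (k:ℝ))]
        rw [Real.rpow_neg_one] at this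
        exact le_trans (min_le_right _ _) this
      · have : (1 : ℝ) = A ^ (0 : ℝ) := (Real.rpow_zero A).symm
        have h5 : A ^ (0:ℝ) ≤ A ^ e := by
          apply Real.rpow_le_rpow_of_exponent_ge hApos hA1.le hel
        calc c ≤ 1 := min_le_left _ _
          _ = A ^ (0:ℝ) := (Real.rpow_zero A).symm
          _ ≤ A ^ e := h5
    calc c / (2 * ((k : ℝ) + 1)) = c * (n : ℝ)⁻¹ := by rw [hncast]; ring
      _ ≤ A ^ e * (n : ℝ)⁻¹ := by
          apply mul_le_mul_of_nonneg_right h4 (by positivity)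
      _ = A ^ e * ((n : ℝ) ^ (n : ℕ)) ^ e := by rw [h3]
      _ = (A * (n : ℝ) ^ (n : ℕ)) ^ e := h2.symm
      _ ≤ (η n) ^ e := h1
  -- comparison
  have hsum2 : Summable (fun k : ℕ => c / (2 * ((k : ℝ) + 1))) :=
    Summable.of_nonneg_of_le (fun k => by positivity) key hsum
  have hsum3 : Summable (fun k : ℕ => 1 / ((k : ℝ) + 1)) := by
    have := hsum2.mul_left (2 / c)
    convert this using 2 with k
    · rfl
    field_simp
  have : Summable (fun k : ℕ => 1 / ((k : ℕ) : ℝ)) := by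
    rw [← summable_nat_add_iff 1]
    convert hsum3 using 2 with k
    · rfl
    push_cast
    ring
  exact Real.not_summable_one_div_natCast this
end

section
/- The moment sequence η_r = r! · Γ(β)² Γ(2−β)² Γ(2β)^r / (Γ(2β−1) Γ(r(2β−1)+3−2β)) (for 1/2 < β < 1) satisfies the Carleman condition Σ_{k=1}^∞ η_{2k}^{−1/(2k)} = ∞, hence determines a unique probability law. -/
open Real

lemma aux_log (q C0 B : ℝ) (hq0 : 0 < q) (hq1 : q < 1) (hC0 : 0 < C0) (hB : 0 < B)
    (r : ℕ) (hr2 : 2 ≤ q * r)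
    (hrlog : (2 / q) * (Real.log B + Real.log 2 + q + 1) ≤ Real.log (q * r - 1))
    (hrC : Real.log C0 ≤ (r : ℝ)) :
    C0 * B ^ r * (r.factorial : ℝ) / Real.Gamma (q * r + (2 - q)) ≤ ((r : ℝ) / 2) ^ r := by
  have hrR : (2 : ℝ) < (r : ℝ) := by nlinarith [hr2, hq1, hq0]
  have hrpos : 0 < (r : ℕ) := by exact_mod_cast (by exact_mod_cast lt_trans two_pos hrR : (0:ℝ) < (r:ℝ))
  set n : ℕ := ⌊q * (r : ℝ)⌋₊ with hn
  have hn2 : 2 ≤ n := Nat.le_floor (by exact_mod_cast hr2)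
  have hnle : (n : ℝ) ≤ q * r := Nat.floor_le (by positivity)
  have hngt : q * r - 1 < (n : ℝ) := Nat.sub_one_lt_floor _
  have hΓarg : (2 : ℝ) ≤ q * r + (2 - q) := by linarith
  have hΓ : (n.factorial : ℝ) ≤ Real.Gamma (q * r + (2 - q)) := by
    have hmem1 : ((n : ℝ) + 1) ∈ Set.Ici (2 : ℝ) := by
      simp only [Set.mem_Ici]
      have : (2 : ℝ) ≤ (n : ℝ) := by exact_mod_cast hn2
      linarith
    have hmem2 : q * r + (2 - q) ∈ Set.Ici (2 : ℝ) := hΓarg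
    have hle : (n : ℝ) + 1 ≤ q * r + (2 - q) := by linarith
    have := Real.Gamma_strictMonoOn_Ici.monotoneOn hmem1 hmem2 hle
    rwa [Real.Gamma_nat_eq_factorial] at this
  have hΓpos : 0 < Real.Gamma (q * r + (2 - q)) := Real.Gamma_pos_of_pos (by linarith)
  have hnfpos : (0 : ℝ) < (n.factorial : ℝ) := by exact_mod_cast n.factorial_pos
  have hrfpos : (0 : ℝ) < (r.factorial : ℝ) := by exact_mod_cast r.factorial_pos
  have step1 : C0 * B ^ r * (r.factorial : ℝ) / Real.Gamma (q * r + (2 - q)) ≤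
      C0 * B ^ r * (r.factorial : ℝ) / (n.factorial : ℝ) := by
    gcongr
  refine step1.trans ?_
  -- log comparison
  have hLpos : 0 < C0 * B ^ r * (r.factorial : ℝ) / (n.factorial : ℝ) := by positivity
  have hRpos : 0 < ((r : ℝ) / 2) ^ r := by positivity
  rw [← Real.log_le_log_iff hLpos hRpos]
  have hlogL : Real.log (C0 * B ^ r * (r.factorial : ℝ) / (n.factorial : ℝ)) =
      Real.log C0 + r * Real.log B + Real.log (r.factorial : ℝ) - Real.log (n.factorial : ℝ) := by
    rw [Real.log_div (by positivity) (by positivity), Real.log_mul (by positivity) (by positivity),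
      Real.log_mul (by positivity) (by positivity), Real.log_pow]
  have hlogR : Real.log (((r : ℝ) / 2) ^ r) = r * (Real.log r - Real.log 2) := by
    rw [Real.log_pow, Real.log_div (by positivity) (by norm_num)]
  rw [hlogL, hlogR]
  have h1 : Real.log (r.factorial : ℝ) ≤ r * Real.log r := by
    have : (r.factorial : ℝ) ≤ (r : ℝ) ^ r := by exact_mod_cast r.factorial_le_pow
    calc Real.log (r.factorial : ℝ) ≤ Real.log ((r : ℝ) ^ r) := Real.log_le_log hrfpos this
    _ = r * Real.log r := Real.log_pow _ _
  have h2 : (n : ℝ) * Real.log n ≤ Real.log (n.factorial : ℝ) + n := by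
    have hpe : (n : ℝ) ^ n ≤ (n.factorial : ℝ) * Real.exp n := by
      have := Real.pow_div_factorial_le_exp (x := (n : ℝ)) (by positivity) n
      rw [div_le_iff₀ hnfpos] at this
      linarith [this]
    have : Real.log ((n : ℝ) ^ n) ≤ Real.log ((n.factorial : ℝ) * Real.exp n) :=
      Real.log_le_log (by positivity) hpe
    rwa [Real.log_pow, Real.log_mul (by positivity) (Real.exp_ne_zero _), Real.log_exp] at this
  have key : Real.log C0 + r * Real.log B + r * Real.log 2 + (n : ℝ) ≤ (n : ℝ) * Real.log n := by
    have hlog0 : 0 ≤ Real.log (q * r - 1) := Real.log_nonneg (by linarith)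
    have hlogn : Real.log (q * r - 1) ≤ Real.log n := Real.log_le_log (by linarith) hngt.le
    have hA : (q * r - 1) * Real.log (q * r - 1) ≤ (n : ℝ) * Real.log n :=
      mul_le_mul hngt.le hlogn hlog0 (by positivity)
    have hB2 : (q * r / 2) * Real.log (q * r - 1) ≤ (q * r - 1) * Real.log (q * r - 1) :=
      mul_le_mul_of_nonneg_right (by linarith) hlog0
    have hC2 : (q * r / 2) * ((2 / q) * (Real.log B + Real.log 2 + q + 1)) ≤
        (q * r / 2) * Real.log (q * r - 1) :=
      mul_le_mul_of_nonneg_left hrlog (by linarith)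
    have hEq : (q * r / 2) * ((2 / q) * (Real.log B + Real.log 2 + q + 1)) =
        r * Real.log B + r * Real.log 2 + q * r + r := by
      field_simp
    rw [hEq] at hC2
    linarith [hA, hB2, hC2, hrC, hnle]
  linarith [h1, h2, key]

/-- The moment sequence `η_r = r! Γ(β)² Γ(2-β)² Γ(2β)^r / (Γ(2β-1) Γ(r(2β-1)+3-2β))`
(for `1/2 < β < 1`) satisfies the Carleman condition `∑_k η_{2k}^{-1/(2k)} = ∞`. -/
theorem stmt9 (β : ℝ) (hβ0 : 1 / 2 < β) (hβ1 : β < 1)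
    (η : ℕ → ℝ)
    (hη : ∀ r : ℕ, η r = (r.factorial : ℝ) *
      Real.Gamma β ^ 2 * Real.Gamma (2 - β) ^ 2 * Real.Gamma (2 * β) ^ (r : ℕ) /
        (Real.Gamma (2 * β - 1) * Real.Gamma (r * (2 * β - 1) + 3 - 2 * β))) :
    ¬ Summable (fun k : ℕ => (η (2 * (k + 1))) ^ (-(1 : ℝ) / (2 * ((k : ℝ) + 1)))) := by
  set q : ℝ := 2 * β - 1 with hqdef
  have hq0 : 0 < q := by rw [hqdef]; linarith
  have hq1 : q < 1 := by rw [hqdef]; linarith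
  have hΓβ : 0 < Real.Gamma β := Real.Gamma_pos_of_pos (by linarith)
  have hΓ2β : 0 < Real.Gamma (2 - β) := Real.Gamma_pos_of_pos (by linarith)
  have hΓq : 0 < Real.Gamma (2 * β - 1) := Real.Gamma_pos_of_pos (by linarith)
  set B : ℝ := Real.Gamma (2 * β) with hBdef
  have hB : 0 < B := Real.Gamma_pos_of_pos (by linarith)
  set C0 : ℝ := Real.Gamma β ^ 2 * Real.Gamma (2 - β) ^ 2 / Real.Gamma (2 * β - 1) with hC0def
  have hC0 : 0 < C0 := div_pos (by positivity) hΓq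
  have hform : ∀ r : ℕ, η r = C0 * B ^ r * (r.factorial : ℝ) / Real.Gamma (q * r + (2 - q)) := by
    intro r
    have harg : (r : ℝ) * (2 * β - 1) + 3 - 2 * β = q * r + (2 - q) := by rw [hqdef]; ring
    have hΓx : 0 < Real.Gamma (q * r + (2 - q)) := by
      apply Real.Gamma_pos_of_pos
      have : (0 : ℝ) ≤ q * r := by positivity
      linarith
    rw [hη r, harg, hC0def]
    field_simp
    ring
  have hηpos : ∀ r : ℕ, 0 < η r := by
    intro r
    rw [hform r]
    have hΓx : 0 < Real.Gamma (q * r + (2 - q)) := by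
      apply Real.Gamma_pos_of_pos
      have : (0 : ℝ) ≤ q * r := by positivity
      linarith
    have : (0 : ℝ) < (r.factorial : ℝ) := by exact_mod_cast r.factorial_pos
    positivity
  set D : ℝ := (2 / q) * (Real.log B + Real.log 2 + q + 1) with hDdef
  set M : ℝ := max (max (2 / q) ((Real.exp D + 1) / q)) (Real.log C0) with hMdef
  set N : ℕ := ⌈M⌉₊ with hNdef
  -- main pointwise bound for k ≥ N
  have main : ∀ k : ℕ, N ≤ k →
      1 / ((k : ℝ) + 1) ≤ η (2 * (k + 1)) ^ (-(1 : ℝ) / (2 * ((k : ℝ) + 1))) := by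
    intro k hk
    have hkM : M ≤ (k : ℝ) := le_trans (Nat.le_ceil M) (by exact_mod_cast hk)
    have hk1 : 2 / q ≤ (k : ℝ) := le_trans (le_trans (le_max_left _ _) (le_max_left _ _)) hkM
    have hk2 : (Real.exp D + 1) / q ≤ (k : ℝ) :=
      le_trans (le_trans (le_max_right _ _) (le_max_left _ _)) hkM
    have hk3 : Real.log C0 ≤ (k : ℝ) := le_trans (le_max_right _ _) hkM
    set r : ℕ := 2 * (k + 1) with hrdef
    have hrcast : (r : ℝ) = 2 * ((k : ℝ) + 1) := by rw [hrdef]; push_cast; ring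
    have hqk : 2 ≤ q * (k : ℝ) := by
      rw [div_le_iff₀ hq0] at hk1; linarith [mul_comm q (k : ℝ)]
    have hr2 : 2 ≤ q * (r : ℝ) := by
      rw [hrcast]; nlinarith [hq0.le]
    have hrlog : D ≤ Real.log (q * (r : ℝ) - 1) := by
      have hqk2 : Real.exp D + 1 ≤ q * (k : ℝ) := by
        rw [div_le_iff₀ hq0] at hk2; linarith [mul_comm q (k : ℝ)]
      have : Real.exp D ≤ q * (r : ℝ) - 1 := by rw [hrcast]; nlinarith [hq0.le]
      calc D = Real.log (Real.exp D) := (Real.log_exp D).symm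
        _ ≤ Real.log (q * (r : ℝ) - 1) := Real.log_le_log (Real.exp_pos D) this
    have hrC : Real.log C0 ≤ (r : ℝ) := by rw [hrcast]; linarith
    have hbound : η r ≤ ((k : ℝ) + 1) ^ r := by
      rw [hform r]
      have h2 := aux_log q C0 B hq0 hq1 hC0 hB r hr2 hrlog hrC
      rw [hrcast, show (2 * ((k : ℝ) + 1)) / 2 = (k : ℝ) + 1 from by ring] at h2
      rw [hrcast]
      exact h2
    have hrne : (r : ℝ) ≠ 0 := by rw [hrcast]; positivity
    have hkpos : (0 : ℝ) < (k : ℝ) + 1 := by positivity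
    have hstep : (((k : ℝ) + 1) ^ r) ^ (-(1 : ℝ) / (r : ℝ)) ≤ η r ^ (-(1 : ℝ) / (r : ℝ)) := by
      apply Real.rpow_le_rpow_of_nonpos (hηpos r) hbound
      apply div_nonpos_of_nonpos_of_nonneg (by norm_num)
      rw [hrcast]; positivity
    have hcomp : (((k : ℝ) + 1) ^ r) ^ (-(1 : ℝ) / (r : ℝ)) = 1 / ((k : ℝ) + 1) := by
      rw [← Real.rpow_natCast ((k : ℝ) + 1) r, ← Real.rpow_mul hkpos.le]
      rw [show (r : ℝ) * (-(1 : ℝ) / (r : ℝ)) = -1 by field_simp]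
      rw [Real.rpow_neg_one]
      exact one_div _ |>.symm
    rw [← hrcast]
    rw [hcomp] at hstep
    exact hstep
  intro hsum
  have hsum2 := (summable_nat_add_iff N).2 hsum
  have hsum3 : Summable (fun k : ℕ => 1 / ((k : ℝ) + (N : ℝ) + 1)) := by
    apply Summable.of_nonneg_of_le (fun k => by positivity) (fun k => ?_) hsum2
    have h := main (k + N) (Nat.le_add_left N k)
    have hc : ((k + N : ℕ) : ℝ) = (k : ℝ) + (N : ℝ) := by push_cast; ring
    simpa only [hc] using h
  have hsum4 : Summable (fun k : ℕ => 1 / ((k : ℝ))) := by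
    rw [← summable_nat_add_iff (N + 1)]
    convert hsum3 using 2 with k
    · rfl
    push_cast
    ring
  exact Real.not_summable_one_div_natCast hsum4
end

section
/- In the Markov shift setting, for the first entrance time φ(x) = min{n ≥ 1 : x_n = 0} to A = {x_0 = 0}, the identity μ({φ = n}) = P_0(φ ≥ n) holds for every n ≥ 1, where μ = Σ_i π_i P_i. -/
open MeasureTheory Set Filter
open scoped ENNReal

private lemma shift_meas17 : Measurable (fun x : ℕ → ℤ => fun n => x (n + 1)) :=
  measurable_pi_lambda _ fun n => measurable_pi_apply (n + 1)

private lemma coord_meas17 (n : ℕ) (j : ℤ) : MeasurableSet {x : ℕ → ℤ | x n = j} := by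
  have : {x : ℕ → ℤ | x n = j} = (fun x : ℕ → ℤ => x n) ⁻¹' {j} := by ext x; simp
  rw [this]
  exact (measurable_pi_apply n) (measurableSet_singleton j)

private lemma phi_eq_iff17 (φ : (ℕ → ℤ) → ℕ)
    (hφ : ∀ x, φ x = sInf {n : ℕ | 1 ≤ n ∧ x n = 0}) (x : ℕ → ℤ) (n : ℕ) (hn : 1 ≤ n) :
    φ x = n ↔ x n = 0 ∧ ∀ k, 1 ≤ k → k < n → x k ≠ 0 := by
  rw [hφ]
  constructor
  · intro h
    have hne : {m : ℕ | 1 ≤ m ∧ x m = 0}.Nonempty := by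
      by_contra hcon
      rw [Set.not_nonempty_iff_eq_empty] at hcon
      rw [hcon] at h
      simp [Nat.sInf_empty] at h
      omega
    have hmem := Nat.sInf_mem hne
    rw [h] at hmem
    refine ⟨hmem.2, ?_⟩
    intro k hk1 hkn hk0
    have := Nat.sInf_le (show k ∈ {m : ℕ | 1 ≤ m ∧ x m = 0} from ⟨hk1, hk0⟩)
    omega
  · rintro ⟨h0, hlt⟩
    refine le_antisymm (Nat.sInf_le ⟨hn, h0⟩) ?_
    refine le_csInf ⟨n, hn, h0⟩ ?_
    intro m hm
    by_contra hcon
    exact hlt m hm.1 (by omega) hm.2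

private lemma phi_meas17 (φ : (ℕ → ℤ) → ℕ)
    (hφ : ∀ x, φ x = sInf {n : ℕ | 1 ≤ n ∧ x n = 0}) (n : ℕ) (hn : 1 ≤ n) :
    MeasurableSet {x : ℕ → ℤ | φ x = n} := by
  have heq : {x : ℕ → ℤ | φ x = n} =
      {x : ℕ → ℤ | x n = 0} ∩ ⋂ k ∈ Finset.Ico 1 n, {x : ℕ → ℤ | x k ≠ 0} := by
    ext x
    simp only [Set.mem_setOf_eq, Set.mem_inter_iff, Set.mem_iInter, Finset.mem_Ico,
      phi_eq_iff17 φ hφ x n hn]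
    constructor
    · rintro ⟨h0, h⟩; exact ⟨h0, fun k hk => h k hk.1 hk.2⟩
    · rintro ⟨h0, h⟩; exact ⟨h0, fun k hk1 hk2 => h k ⟨hk1, hk2⟩⟩
  rw [heq]
  refine (coord_meas17 n 0).inter ?_
  exact MeasurableSet.biInter (Finset.countable_toSet _)
    (fun k _ => (coord_meas17 k 0).compl)

/-- If `i ≠ 0` and `S ⊆ {x | x 0 = 0}` then `P i S = 0`. -/
private lemma Pi_vanish17 (P : ℤ → Measure (ℕ → ℤ)) (hPprob : ∀ i, IsProbabilityMeasure (P i))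
    (hstart : ∀ i, P i {x | x 0 = i} = 1) (i : ℤ) (hi : i ≠ 0)
    (S : Set (ℕ → ℤ)) (hS : S ⊆ {x | x 0 = 0}) : P i S = 0 := by
  have := hPprob i
  have h1 : P i {x : ℕ → ℤ | x 0 = i}ᶜ = 0 := by
    rw [measure_compl (coord_meas17 0 i) (measure_ne_top _ _), hstart i]
    simp
  refine le_antisymm ?_ zero_le
  rw [← h1]
  apply measure_mono
  intro x hx
  have h0 : x 0 = 0 := hS hx
  simp only [Set.mem_compl_iff, Set.mem_setOf_eq, h0]
  exact fun h => hi h.symm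

private lemma mu_apply17 (P : ℤ → Measure (ℕ → ℤ)) (π : ℤ → ℝ≥0∞)
    (μ : Measure (ℕ → ℤ)) (hμ : μ = Measure.sum (fun i => π i • P i))
    (S : Set (ℕ → ℤ)) (hS : MeasurableSet S) : μ S = ∑' i, π i * P i S := by
  rw [hμ, Measure.sum_apply _ hS]
  simp [Measure.smul_apply, smul_eq_mul]

private lemma map_apply17 (P : ℤ → Measure (ℕ → ℤ)) (pm : ℤ → ℤ → ℝ≥0∞)
    (hMarkov : ∀ i, (P i).map (fun x n => x (n + 1)) = Measure.sum (fun j => pm i j • P j))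
    (i : ℤ) (S : Set (ℕ → ℤ)) (hS : MeasurableSet S) :
    P i ((fun x : ℕ → ℤ => fun n => x (n + 1)) ⁻¹' S) = ∑' j, pm i j * P j S := by
  have h := hMarkov i
  have h2 : ((P i).map (fun x : ℕ → ℤ => fun n => x (n + 1))) S
      = P i ((fun x : ℕ → ℤ => fun n => x (n + 1)) ⁻¹' S) :=
    Measure.map_apply shift_meas17 hS
  rw [h] at h2
  rw [← h2, Measure.sum_apply _ hS]
  simp [Measure.smul_apply, smul_eq_mul]

/-- Shift invariance of μ. -/
private lemma mu_shift17 (P : ℤ → Measure (ℕ → ℤ)) (π : ℤ → ℝ≥0∞) (pm : ℤ → ℤ → ℝ≥0∞)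
    (hMarkov : ∀ i, (P i).map (fun x n => x (n + 1)) = Measure.sum (fun j => pm i j • P j))
    (hinvariant : ∀ j, π j = ∑' i, π i * pm i j)
    (μ : Measure (ℕ → ℤ)) (hμ : μ = Measure.sum (fun i => π i • P i))
    (S : Set (ℕ → ℤ)) (hS : MeasurableSet S) :
    μ ((fun x : ℕ → ℤ => fun n => x (n + 1)) ⁻¹' S) = μ S := by
  rw [mu_apply17 P π μ hμ _ (shift_meas17 hS), mu_apply17 P π μ hμ S hS]
  calc ∑' i, π i * P i ((fun x : ℕ → ℤ => fun n => x (n + 1)) ⁻¹' S)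
      = ∑' i, π i * ∑' j, pm i j * P j S := by
        congr 1; funext i; rw [map_apply17 P pm hMarkov i S hS]
    _ = ∑' i, ∑' j, π i * pm i j * P j S := by
        congr 1; funext i
        rw [← ENNReal.tsum_mul_left]
        congr 1; funext j; ring
    _ = ∑' j, ∑' i, π i * pm i j * P j S := ENNReal.tsum_comm
    _ = ∑' j, (∑' i, π i * pm i j) * P j S := by
        congr 1; funext j; rw [ENNReal.tsum_mul_right]
    _ = ∑' j, π j * P j S := by
        congr 1; funext j; rw [← hinvariant j]

/-- In the null recurrent Markov shift setting, with first entrance time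
`φ(x) = min{n ≥ 1 : x_n = 0}` to `A = {x : x₀ = 0}` and `μ = ∑ᵢ πᵢ Pᵢ`, the identity
`μ({φ = n}) = P₀(φ ≥ n)` holds for every `n ≥ 1`. -/
theorem stmt17
    (P : ℤ → Measure (ℕ → ℤ)) (hPprob : ∀ i, IsProbabilityMeasure (P i))
    (π : ℤ → ℝ≥0∞) (hπpos : ∀ i, 0 < π i) (hπ0 : π 0 = 1)
    (pm : ℤ → ℤ → ℝ≥0∞)
    (hstart : ∀ i, P i {x | x 0 = i} = 1)
    (hMarkov : ∀ i, (P i).map (fun x n => x (n + 1)) = Measure.sum (fun j => pm i j • P j))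
    (hinvariant : ∀ j, π j = ∑' i, π i * pm i j)
    (hnullrec : ∑' i, π i = ⊤)
    (hirred : ∀ i j : ℤ, ∃ n : ℕ, 0 < P i {x | x n = j})
    (hrec : ∀ i, P i {x | ∀ m : ℕ, ∃ n : ℕ, m ≤ n ∧ x n = 0} = 1)
    (μ : Measure (ℕ → ℤ)) (hμ : μ = Measure.sum (fun i => π i • P i))
    (φ : (ℕ → ℤ) → ℕ) (hφ : ∀ x, φ x = sInf {n : ℕ | 1 ≤ n ∧ x n = 0}) :
    ∀ n : ℕ, 1 ≤ n → μ {x | φ x = n} = P 0 {x | n ≤ φ x} := by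
  -- notation
  set shift : (ℕ → ℤ) → (ℕ → ℤ) := fun x n => x (n + 1) with hshift
  -- P 0 {1 ≤ φ} = 1
  have hφ1 : P 0 {x | 1 ≤ φ x} = 1 := by
    have := hPprob 0
    refine le_antisymm prob_le_one ?_
    rw [← hrec 0]
    apply measure_mono
    intro x hx
    obtain ⟨n, hn1, hn0⟩ := hx 1
    have hmem := Nat.sInf_mem (⟨n, hn1, hn0⟩ : {m : ℕ | 1 ≤ m ∧ x m = 0}.Nonempty)
    simp only [Set.mem_setOf_eq, hφ x]
    exact hmem.1
  -- μ of subsets of {x 0 = 0} concentrate at i = 0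
  have hconc : ∀ S : Set (ℕ → ℤ), MeasurableSet S → S ⊆ {x | x 0 = 0} →
      μ S = P 0 S := by
    intro S hSm hSsub
    rw [mu_apply17 P π μ hμ S hSm]
    rw [tsum_eq_single 0 (fun i hi => by
      rw [Pi_vanish17 P hPprob hstart i hi S hSsub, mul_zero])]
    rw [hπ0, one_mul]
  -- base case
  have hbase : μ {x | φ x = 1} = 1 := by
    have heq : {x : ℕ → ℤ | φ x = 1} = shift ⁻¹' {x | x 0 = 0} := by
      ext x
      simp only [Set.mem_setOf_eq, Set.mem_preimage, hshift,
        phi_eq_iff17 φ hφ x 1 le_rfl]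
      constructor
      · rintro ⟨h, -⟩; exact h
      · intro h; exact ⟨h, fun k hk1 hk2 => absurd (lt_of_lt_of_le hk2 hk1) (lt_irrefl _)⟩
    rw [heq, mu_shift17 P π pm hMarkov hinvariant μ hμ _ (coord_meas17 0 0),
      hconc _ (coord_meas17 0 0) (fun x hx => hx), hstart 0]
  -- induction
  intro n hn
  induction n with
  | zero => omega
  | succ n ih =>
    rcases Nat.eq_or_lt_of_le hn with h1 | h1
    · -- n + 1 = 1
      have hn0 : n = 0 := by omega
      subst hn0
      rw [hbase, hφ1]
    · have hn1 : 1 ≤ n := by omega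
      have ihn := ih hn1
      -- decomposition of {φ = n} by x 0
      have hmn := phi_meas17 φ hφ n hn1
      have hA : MeasurableSet ({x : ℕ → ℤ | x 0 = 0} ∩ {x | φ x = n}) :=
        (coord_meas17 0 0).inter hmn
      have hB : MeasurableSet ({x : ℕ → ℤ | x 0 ≠ 0} ∩ {x | φ x = n}) :=
        (coord_meas17 0 0).compl.inter hmn
      -- step set identity
      have hstep : {x : ℕ → ℤ | φ x = n + 1}
          = shift ⁻¹' ({x : ℕ → ℤ | x 0 ≠ 0} ∩ {x | φ x = n}) := by
        ext x
        simp only [Set.mem_setOf_eq, Set.mem_preimage, Set.mem_inter_iff, hshift,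
          phi_eq_iff17 φ hφ x (n + 1) (by omega),
          phi_eq_iff17 φ hφ (fun m => x (m + 1)) n hn1]
        constructor
        · rintro ⟨h0, h⟩
          refine ⟨h 1 le_rfl (by omega), h0, fun k hk1 hk2 => h (k + 1) (by omega) (by omega)⟩
        · rintro ⟨h1', h0, h⟩
          refine ⟨h0, fun k hk1 hk2 => ?_⟩
          rcases Nat.eq_or_lt_of_le hk1 with he | he
          · rw [← he]; exact h1'
          · have : k - 1 + 1 = k := by omega
            rw [← this]; exact h (k - 1) (by omega) (by omega)
      -- μ {φ = n+1} = μ (B)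
      have e1 : μ {x | φ x = n + 1} = μ ({x : ℕ → ℤ | x 0 ≠ 0} ∩ {x | φ x = n}) := by
        rw [hstep]; exact mu_shift17 P π pm hMarkov hinvariant μ hμ _ hB
      -- μ {φ = n} = μ A + μ B
      have e2 : μ {x | φ x = n} = μ ({x : ℕ → ℤ | x 0 = 0} ∩ {x | φ x = n})
          + μ ({x : ℕ → ℤ | x 0 ≠ 0} ∩ {x | φ x = n}) := by
        rw [← measure_union ?_ hB]
        · congr 1
          ext x
          simp only [Set.mem_setOf_eq, Set.mem_union, Set.mem_inter_iff]
          by_cases h : x 0 = 0 <;> simp [h]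
        · exact Set.disjoint_left.mpr (fun x hx hx' => hx'.1 hx.1)
      -- μ A = P 0 {φ = n}
      have e3 : μ ({x : ℕ → ℤ | x 0 = 0} ∩ {x | φ x = n}) = P 0 {x | φ x = n} := by
        rw [hconc _ hA (fun x hx => hx.1)]
        have := hPprob 0
        refine le_antisymm (measure_mono (Set.inter_subset_right)) ?_
        have hsub : {x : ℕ → ℤ | φ x = n} ⊆
            ({x : ℕ → ℤ | x 0 = 0} ∩ {x | φ x = n}) ∪ {x : ℕ → ℤ | x 0 = 0}ᶜ := by
          intro x hx
          by_cases h : x 0 = 0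
          · exact Or.inl ⟨h, hx⟩
          · exact Or.inr h
        calc P 0 {x | φ x = n} ≤ P 0 (({x : ℕ → ℤ | x 0 = 0} ∩ {x | φ x = n})
              ∪ {x : ℕ → ℤ | x 0 = 0}ᶜ) := measure_mono hsub
          _ ≤ P 0 ({x : ℕ → ℤ | x 0 = 0} ∩ {x | φ x = n})
              + P 0 ({x : ℕ → ℤ | x 0 = 0}ᶜ) := measure_union_le _ _
          _ = P 0 ({x : ℕ → ℤ | x 0 = 0} ∩ {x | φ x = n}) := by
              rw [measure_compl (coord_meas17 0 0) (measure_ne_top _ _), hstart 0]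
              simp
      -- P 0 {n ≤ φ} = P 0 {n+1 ≤ φ} + P 0 {φ = n}
      have e4 : P 0 {x | n ≤ φ x} = P 0 {x | n + 1 ≤ φ x} + P 0 {x | φ x = n} := by
        rw [← measure_union ?_ hmn]
        · congr 1
          ext x
          simp only [Set.mem_setOf_eq, Set.mem_union]
          omega
        · exact Set.disjoint_left.mpr (fun x hx hx' => by
            simp only [Set.mem_setOf_eq] at hx hx'; omega)
      -- combine with cancellation
      have hfin : P 0 {x | φ x = n} ≠ ⊤ := by
        have := hPprob 0; exact measure_ne_top _ _
      have key : μ {x | φ x = n + 1} + P 0 {x | φ x = n}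
          = P 0 {x | n + 1 ≤ φ x} + P 0 {x | φ x = n} := by
        rw [e1, ← e3, add_comm, ← e2, ihn, e4, e3]
      exact WithTop.add_right_cancel hfin key
end

section
/- Boole's transformation T(x) = x(1−x)/(1 − x − x²) for x ∈ (0,1/2), T(x) = 1 − T(1−x) for x ∈ (1/2,1), preserves the measure μ on (0,1)∖{1/2} with density dμ/dλ(x) = 1/x² + 1/(1−x)², i.e., μ(T⁻¹B) = μ(B) for every Borel set B. -/
open MeasureTheory Set ENNReal

/-- 1-dimensional change of variables for Lebesgue integrals. -/
lemma lintegral_image_1d {s : Set ℝ} {f f' : ℝ → ℝ} (hs : MeasurableSet s)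
    (hf' : ∀ x ∈ s, HasDerivWithinAt f (f' x) s x) (hf : Set.InjOn f s) (g : ℝ → ℝ≥0∞) :
    ∫⁻ x in f '' s, g x = ∫⁻ x in s, ENNReal.ofReal |f' x| * g (f x) := by
  simpa only [ContinuousLinearMap.det_toSpanSingleton] using
    lintegral_image_eq_lintegral_abs_det_fderiv_mul volume hs
      (fun x hx => (hf' x hx).hasFDerivWithinAt) hf g

/-- Generic branch lemma: if `f` is differentiable with positive derivative `d`
on `[a,b]` with `f a = 0`, `f b = 1`, then the change-of-variables formula holds. -/
lemma branch_lintegral {a b : ℝ} {f d : ℝ → ℝ} (hab : a < b)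
    (hd : ∀ x ∈ Icc a b, HasDerivAt f (d x) x)
    (hdpos : ∀ x ∈ Ioo a b, 0 < d x)
    (hfa : f a = 0) (hfb : f b = 1)
    (g : ℝ → ℝ≥0∞) :
    ∫⁻ x in Ioo a b, ENNReal.ofReal |d x| * g (f x) = ∫⁻ y in Ioo (0:ℝ) 1, g y := by
  have hcont : ContinuousOn f (Icc a b) := fun x hx =>
    ((hd x hx).continuousAt).continuousWithinAt
  have hmono : StrictMonoOn f (Icc a b) := by
    apply strictMonoOn_of_deriv_pos (convex_Icc a b) hcont
    intro x hx
    rw [interior_Icc] at hx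
    rw [(hd x (Ioo_subset_Icc_self hx)).deriv]
    exact hdpos x hx
  have himg : f '' Ioo a b = Ioo (0:ℝ) 1 := by
    apply Subset.antisymm
    · rintro y ⟨x, hx, rfl⟩
      constructor
      · rw [← hfa]
        exact hmono (left_mem_Icc.2 hab.le) (Ioo_subset_Icc_self hx) hx.1
      · rw [← hfb]
        exact hmono (Ioo_subset_Icc_self hx) (right_mem_Icc.2 hab.le) hx.2
    · have := intermediate_value_Ioo hab.le hcont
      rwa [hfa, hfb] at this
  rw [← himg, lintegral_image_1d measurableSet_Ioo
    (fun x hx => ((hd x (Ioo_subset_Icc_self hx)).hasDerivWithinAt))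
    (hmono.injOn.mono Ioo_subset_Icc_self) g]

/-- Boole's transformation `T(x) = x(1-x)/(1-x-x²)` on `(0,1/2)`,
`T(x) = 1 - T(1-x)` on `(1/2,1)`, preserves the measure `μ` with density
`1/x² + 1/(1-x)²` with respect to Lebesgue measure on `E = (0,1/2) ∪ (1/2,1)`. -/
theorem stmt18
    (T : ℝ → ℝ)
    (hTdef : ∀ x : ℝ, T x = if x < 1 / 2 then x * (1 - x) / (1 - x - x ^ 2)
      else 1 - (1 - x) * x / (x - (1 - x) ^ 2))
    (E : Set ℝ) (hE : E = Set.Ioo (0 : ℝ) (1 / 2) ∪ Set.Ioo (1 / 2 : ℝ) 1)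
    (μ : Measure ℝ)
    (hμ : μ = (volume.withDensity
      fun x => ENNReal.ofReal (1 / x ^ 2 + 1 / (1 - x) ^ 2)).restrict E) :
    ∀ B : Set ℝ, MeasurableSet B → μ (T ⁻¹' B) = μ B := by
  intro B hB
  -- notation
  set w : ℝ → ℝ≥0∞ := fun x => ENNReal.ofReal (1 / x ^ 2 + 1 / (1 - x) ^ 2) with hw
  set f₁ : ℝ → ℝ := fun x => x * (1 - x) / (1 - x - x ^ 2) with hf₁
  set f₂ : ℝ → ℝ := fun x => 1 - (1 - x) * x / (x - (1 - x) ^ 2) with hf₂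
  set d₁ : ℝ → ℝ := fun x => (1 - 2*x + 2*x^2) / (1 - x - x ^ 2) ^ 2 with hd₁
  set d₂ : ℝ → ℝ := fun x => (1 - 2*x + 2*x^2) / (x - (1 - x) ^ 2) ^ 2 with hd₂
  have hTmeas : Measurable T := by
    have : T = fun x : ℝ => if x < 1 / 2 then x * (1 - x) / (1 - x - x ^ 2)
        else 1 - (1 - x) * x / (x - (1 - x) ^ 2) := funext hTdef
    rw [this]
    apply Measurable.ite (measurableSet_lt measurable_id measurable_const)
    · fun_prop
    · fun_prop
  have hnum_pos : ∀ x : ℝ, 0 < 1 - 2*x + 2*x^2 := by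
    intro x; nlinarith [sq_nonneg (2*x - 1)]
  -- denominators positive
  have hden₁ : ∀ x ∈ Icc (0:ℝ) (1/2), 0 < 1 - x - x ^ 2 := by
    intro x hx; nlinarith [hx.1, hx.2]
  have hden₂ : ∀ x ∈ Icc (1/2 : ℝ) 1, 0 < x - (1 - x) ^ 2 := by
    intro x hx; nlinarith [hx.1, hx.2]
  -- derivatives
  have hderiv₁ : ∀ x ∈ Icc (0:ℝ) (1/2), HasDerivAt f₁ (d₁ x) x := by
    intro x hx
    have hne : (1 - x - x ^ 2) ≠ 0 := (hden₁ x hx).ne'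
    have hn : HasDerivAt (fun y : ℝ => y * (1 - y)) (1 - 2*x) x := by
      have := (hasDerivAt_id x).mul ((hasDerivAt_const x (1:ℝ)).sub (hasDerivAt_id x))
      refine this.congr_deriv ?_; try simp only [id_eq]
      simp; ring
    have hm : HasDerivAt (fun y : ℝ => 1 - y - y ^ 2) (-1 - 2*x) x := by
      have := (((hasDerivAt_const x (1:ℝ)).sub (hasDerivAt_id x)).sub (hasDerivAt_pow 2 x))
      refine this.congr_deriv ?_; try simp only [id_eq]
      simp
    have := hn.div hm hne
    refine (this.congr_deriv ?_)
    rw [hd₁]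
    field_simp
    ring
  have hderiv₂ : ∀ x ∈ Icc (1/2:ℝ) 1, HasDerivAt f₂ (d₂ x) x := by
    intro x hx
    have hne : (x - (1 - x) ^ 2) ≠ 0 := (hden₂ x hx).ne'
    have hn : HasDerivAt (fun y : ℝ => (1 - y) * y) (1 - 2*x) x := by
      have := ((hasDerivAt_const x (1:ℝ)).sub (hasDerivAt_id x)).mul (hasDerivAt_id x)
      refine this.congr_deriv ?_; try simp only [id_eq]
      simp; ring
    have hm : HasDerivAt (fun y : ℝ => y - (1 - y) ^ 2) (3 - 2*x) x := by
      have h2 : HasDerivAt (fun y : ℝ => (1 - y) ^ 2) (2 * (1 - x) * (-1)) x := by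
        have hin : HasDerivAt (fun y : ℝ => 1 - y) (-1 : ℝ) x := by
          exact ((hasDerivAt_const x (1:ℝ)).sub (hasDerivAt_id x)).congr_deriv (by norm_num)
        exact (hin.pow 2).congr_deriv (by simp)
      have := (hasDerivAt_id x).sub h2
      refine this.congr_deriv ?_; try simp only [id_eq]
      simp; ring
    have := (hasDerivAt_const x (1:ℝ)).sub (hn.div hm hne)
    refine (this.congr_deriv ?_)
    rw [hd₂]
    field_simp
    ring
  have hdpos₁ : ∀ x ∈ Ioo (0:ℝ) (1/2), 0 < d₁ x := by
    intro x hx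
    exact div_pos (hnum_pos x) (pow_pos (hden₁ x (Ioo_subset_Icc_self hx)) 2)
  have hdpos₂ : ∀ x ∈ Ioo (1/2:ℝ) 1, 0 < d₂ x := by
    intro x hx
    exact div_pos (hnum_pos x) (pow_pos (hden₂ x (Ioo_subset_Icc_self hx)) 2)
  have hfa₁ : f₁ 0 = 0 := by norm_num [hf₁]
  have hfb₁ : f₁ (1/2) = 1 := by norm_num [hf₁]
  have hfa₂ : f₂ (1/2) = 0 := by norm_num [hf₂]
  have hfb₂ : f₂ 1 = 1 := by norm_num [hf₂]
  -- key pointwise identities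
  have hkey₁ : ∀ x ∈ Ioo (0:ℝ) (1/2),
      ENNReal.ofReal |d₁ x| * ENNReal.ofReal (1 / (f₁ x) ^ 2) = w x := by
    intro x hx
    have hpos := hdpos₁ x hx
    rw [abs_of_pos hpos, ← ENNReal.ofReal_mul hpos.le, hw]
    congr 1
    have hx0 : x ≠ 0 := hx.1.ne'
    have hx1 : (1:ℝ) - x ≠ 0 := by have := hx.2; intro h; rw [sub_eq_zero] at h; linarith
    have hden : (1:ℝ) - x - x ^ 2 ≠ 0 := (hden₁ x (Ioo_subset_Icc_self hx)).ne'
    rw [hd₁, hf₁]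
    field_simp
    ring
  have hkey₂ : ∀ x ∈ Ioo (1/2:ℝ) 1,
      ENNReal.ofReal |d₂ x| * ENNReal.ofReal (1 / (1 - f₂ x) ^ 2) = w x := by
    intro x hx
    have hpos := hdpos₂ x hx
    rw [abs_of_pos hpos, ← ENNReal.ofReal_mul hpos.le, hw]
    congr 1
    have hx0 : x ≠ 0 := by have := hx.1; positivity
    have hx1 : (1:ℝ) - x ≠ 0 := by have := hx.2; intro h; rw [sub_eq_zero] at h; linarith
    have hden : x - (1 - x) ^ 2 ≠ 0 := (hden₂ x (Ioo_subset_Icc_self hx)).ne'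
    rw [hd₂, hf₂]
    field_simp
    ring
  -- T agrees with branches
  have hT₁ : ∀ x ∈ Ioo (0:ℝ) (1/2), T x = f₁ x := by
    intro x hx
    rw [hTdef x, if_pos hx.2]
  have hT₂ : ∀ x ∈ Ioo (1/2:ℝ) 1, T x = f₂ x := by
    intro x hx
    rw [hTdef x, if_neg (not_lt.2 hx.1.le)]
  -- the two branch integrals
  have hbranch₁ : ∫⁻ x in T ⁻¹' B ∩ Ioo (0:ℝ) (1/2), w x
      = ∫⁻ y in B ∩ Ioo (0:ℝ) 1, ENNReal.ofReal (1 / y ^ 2) := by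
    have h1 : ∫⁻ x in T ⁻¹' B ∩ Ioo (0:ℝ) (1/2), w x
        = ∫⁻ x in Ioo (0:ℝ) (1/2), ENNReal.ofReal |d₁ x| *
            (B.indicator (fun y => ENNReal.ofReal (1 / y ^ 2))) (f₁ x) := by
      rw [← Measure.restrict_restrict (hTmeas hB), ← lintegral_indicator (hTmeas hB) w]
      apply setLIntegral_congr_fun measurableSet_Ioo
      intro x hxI
      beta_reduce
      by_cases hxB : T x ∈ B
      · rw [Set.indicator_of_mem (show x ∈ T ⁻¹' B from hxB),
          Set.indicator_of_mem (show f₁ x ∈ B by rwa [← hT₁ x hxI])]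
        exact (hkey₁ x hxI).symm
      · rw [Set.indicator_of_notMem (show x ∉ T ⁻¹' B from hxB),
          Set.indicator_of_notMem (show f₁ x ∉ B by rwa [← hT₁ x hxI]), mul_zero]
    rw [h1, branch_lintegral (by norm_num) hderiv₁ hdpos₁ hfa₁ hfb₁,
      lintegral_indicator hB, Measure.restrict_restrict hB]
  have hbranch₂ : ∫⁻ x in T ⁻¹' B ∩ Ioo (1/2:ℝ) 1, w x
      = ∫⁻ y in B ∩ Ioo (0:ℝ) 1, ENNReal.ofReal (1 / (1 - y) ^ 2) := by
    have h1 : ∫⁻ x in T ⁻¹' B ∩ Ioo (1/2:ℝ) 1, w x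
        = ∫⁻ x in Ioo (1/2:ℝ) 1, ENNReal.ofReal |d₂ x| *
            (B.indicator (fun y => ENNReal.ofReal (1 / (1 - y) ^ 2))) (f₂ x) := by
      rw [← Measure.restrict_restrict (hTmeas hB), ← lintegral_indicator (hTmeas hB) w]
      apply setLIntegral_congr_fun measurableSet_Ioo
      intro x hxI
      beta_reduce
      by_cases hxB : T x ∈ B
      · rw [Set.indicator_of_mem (show x ∈ T ⁻¹' B from hxB),
          Set.indicator_of_mem (show f₂ x ∈ B by rwa [← hT₂ x hxI])]
        exact (hkey₂ x hxI).symm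
      · rw [Set.indicator_of_notMem (show x ∉ T ⁻¹' B from hxB),
          Set.indicator_of_notMem (show f₂ x ∉ B by rwa [← hT₂ x hxI]), mul_zero]
    rw [h1, branch_lintegral (by norm_num) hderiv₂ hdpos₂ hfa₂ hfb₂,
      lintegral_indicator hB, Measure.restrict_restrict hB]
  -- measurability of E
  have hEmeas : MeasurableSet E := by
    rw [hE]; exact measurableSet_Ioo.union measurableSet_Ioo
  -- E and Ioo 0 1 are a.e. equal
  have hEae : E =ᵐ[volume] Ioo (0:ℝ) 1 := by
    rw [Filter.eventuallyEq_set]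
    have : {x : ℝ | ¬(x ∈ E ↔ x ∈ Ioo (0:ℝ) 1)} ⊆ {(1/2 : ℝ)} := by
      intro x hx
      simp only [mem_setOf_eq, hE, mem_union, mem_Ioo, mem_singleton_iff] at hx ⊢
      by_contra hne
      apply hx
      constructor
      · rintro (⟨h1, h2⟩ | ⟨h1, h2⟩) <;> constructor <;> linarith
      · rintro ⟨h1, h2⟩
        rcases lt_trichotomy x (1/2) with h | h | h
        · left; exact ⟨h1, h⟩
        · exact absurd h hne
        · right; exact ⟨h, h2⟩
    have hnull : volume {x : ℝ | ¬(x ∈ E ↔ x ∈ Ioo (0:ℝ) 1)} = 0 :=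
      measure_mono_null this (by simp)
    exact Filter.eventually_of_mem (compl_mem_ae_iff.2 hnull)
      (fun x hx => not_not.1 (fun h => hx h))
  -- compute both sides
  have hμapp : ∀ A : Set ℝ, MeasurableSet A → μ A = ∫⁻ x in A ∩ E, w x := by
    intro A hA
    rw [hμ, Measure.restrict_apply hA, withDensity_apply _ (hA.inter hEmeas)]
  rw [hμapp _ (hTmeas hB), hμapp _ hB]
  -- RHS
  have hRHS : ∫⁻ x in B ∩ E, w x = ∫⁻ x in B ∩ Ioo (0:ℝ) 1, w x :=
    setLIntegral_congr (ae_eq_set_inter (ae_eq_refl _) hEae)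
  rw [hRHS]
  -- LHS : split into two branches
  have hsplit : T ⁻¹' B ∩ E = (T ⁻¹' B ∩ Ioo (0:ℝ) (1/2)) ∪ (T ⁻¹' B ∩ Ioo (1/2:ℝ) 1) := by
    rw [hE, inter_union_distrib_left]
  have hdisj : Disjoint (T ⁻¹' B ∩ Ioo (0:ℝ) (1/2)) (T ⁻¹' B ∩ Ioo (1/2:ℝ) 1) :=
    Disjoint.mono inter_subset_right inter_subset_right
      (Set.Ioo_disjoint_Ioo.2 (by norm_num))
  rw [hsplit, lintegral_union ((hTmeas hB).inter measurableSet_Ioo) hdisj,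
    hbranch₁, hbranch₂, ← lintegral_add_left (by fun_prop)]
  apply lintegral_congr
  intro y
  rw [hw, ← ENNReal.ofReal_add (by positivity) (by positivity)]
end
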